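/- Let k be a commutative ring, A an associative unital k-algebra, λ ∈ k, and let P be a Rota–Baxter operator of weight λ on A. Define P̄ : (ℕ → A) → (ℕ → A) by P̄(f)(0) = P(f(0)) and P̄(f)(n) = f(n−1) for n > 0. Then on ℕ → A equipped with the λ-Hurwitz product: (i) P̄ is a Rota–Baxter operator of weight λ; (ii) d ∘ P̄ = id, where d is the shift map d(f)(n) = f(n+1); (iii) evaluation at 0 intertwines P̄ and P, i.e., P̄(f)(0) = P(f(0)) for all f. -/

import Mathlib

open Finset

/-- The `lam`-Hurwitz product of sequences in a `k`-algebra `A`. -/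
def hurwitz {k A : Type*} [CommRing k] [Ring A] [Algebra k A]
    (lam : k) (f g : ℕ → A) : ℕ → A := fun n =>
  ∑ p ∈ Finset.HasAntidiagonal.antidiagonal n, ∑ q ∈ Finset.HasAntidiagonal.antidiagonal p.2,
    (Nat.factorial n / (Nat.factorial p.1 * Nat.factorial q.1 * Nat.factorial q.2)) •
      lam ^ q.2 • (f (p.1 + q.2) * g (q.1 + q.2))

/-- `P̄(f)(0) = P(f 0)` and `P̄(f)(n) = f(n-1)` for `n > 0`. -/
def pbar {A : Type*} (P : A → A) (f : ℕ → A) : ℕ → A := fun n =>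
  match n with
  | 0 => P (f 0)
  | m + 1 => f m

section Aux

variable {M : Type*} [AddCommMonoid M]

/-- Binomial-weighted sum over the antidiagonal. -/
def bsum (n : ℕ) (G : ℕ → ℕ → M) : M :=
  ∑ q ∈ Finset.HasAntidiagonal.antidiagonal n, (n.choose q.1) • G q.1 q.2

lemma bsum_add (n : ℕ) (G H : ℕ → ℕ → M) :
    bsum n (fun s t => G s t + H s t) = bsum n G + bsum n H := by
  simp [bsum, smul_add, Finset.sum_add_distrib]

lemma bsum_succ (n : ℕ) (G : ℕ → ℕ → M) :
    bsum (n+1) G = bsum n (fun s t => G (s+1) t) + bsum n (fun s t => G s (t+1)) := by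
  have e1 : bsum (n+1) G
      = G 0 (n+1) + ∑ q ∈ Finset.HasAntidiagonal.antidiagonal n, ((n+1).choose (q.1+1)) • G (q.1+1) q.2 := by
    rw [bsum, Finset.Nat.sum_antidiagonal_succ]; simp
  have e2 : ∑ q ∈ Finset.HasAntidiagonal.antidiagonal (n+1), (n.choose q.1) • G q.1 q.2
      = G 0 (n+1) + ∑ q ∈ Finset.HasAntidiagonal.antidiagonal n, (n.choose (q.1+1)) • G (q.1+1) q.2 := by
    rw [Finset.Nat.sum_antidiagonal_succ]; simp
  have e3 : ∑ q ∈ Finset.HasAntidiagonal.antidiagonal (n+1), (n.choose q.1) • G q.1 q.2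
      = bsum n (fun s t => G s (t+1)) := by
    rw [Finset.Nat.sum_antidiagonal_succ', Nat.choose_succ_self]
    simp [bsum]
  rw [e1]
  simp only [Nat.choose_succ_succ, add_smul, Finset.sum_add_distrib]
  rw [add_comm (∑ q ∈ Finset.HasAntidiagonal.antidiagonal n, (n.choose q.1) • G (q.1+1) q.2), ← add_assoc,
    ← e2, e3, add_comm]
  rfl

/-- Double binomial-weighted sum. -/
def ssum (n : ℕ) (F : ℕ → ℕ → ℕ → M) : M :=
  bsum n (fun r w => bsum w (fun s t => F r s t))

lemma ssum_succ (n : ℕ) (F : ℕ → ℕ → ℕ → M) :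
    ssum (n+1) F = ssum n (fun r s t => F (r+1) s t) + ssum n (fun r s t => F r (s+1) t)
      + ssum n (fun r s t => F r s (t+1)) := by
  rw [ssum, bsum_succ]
  have : (fun r w => bsum (w+1) (fun s t => F r s t))
      = fun r w => (bsum w (fun s t => F r (s+1) t) + bsum w (fun s t => F r s (t+1))) := by
    funext r w; rw [bsum_succ]
  rw [this, bsum_add, ssum, ssum, ssum, add_assoc]

end Aux

lemma multi_eq {p1 p2 q1 q2 n : ℕ} (hp : p1 + p2 = n) (hq : q1 + q2 = p2) :
    n.factorial / (p1.factorial * q1.factorial * q2.factorial) = n.choose p1 * p2.choose q1 := by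
  subst hq; subst hp
  have h1 := Nat.choose_mul_factorial_mul_factorial (Nat.le_add_right p1 (q1 + q2))
  have h2 := Nat.choose_mul_factorial_mul_factorial (Nat.le_add_right q1 q2)
  rw [Nat.add_sub_cancel_left] at h1 h2
  have key : (p1 + (q1 + q2)).factorial
      = ((p1 + (q1 + q2)).choose p1 * (q1 + q2).choose q1)
        * (p1.factorial * q1.factorial * q2.factorial) := by
    rw [← h1, ← h2]; ring
  rw [key, Nat.mul_div_cancel]
  positivity

lemma hurwitz_eq_ssum {k A : Type*} [CommRing k] [Ring A] [Algebra k A]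
    (lam : k) (f g : ℕ → A) (n : ℕ) :
    hurwitz lam f g n = ssum n (fun r s t => lam ^ t • (f (r + t) * g (s + t))) := by
  unfold hurwitz ssum bsum
  refine Finset.sum_congr rfl fun p hp => ?_
  rw [Finset.smul_sum]
  refine Finset.sum_congr rfl fun q hq => ?_
  rw [Finset.HasAntidiagonal.mem_antidiagonal] at hp hq
  rw [multi_eq hp hq, mul_smul]

lemma bsum_ksmul {k A : Type*} [CommRing k] [Ring A] [Algebra k A]
    (c : k) (n : ℕ) (G : ℕ → ℕ → A) :
    bsum n (fun s t => c • G s t) = c • bsum n G := by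
  simp [bsum, Finset.smul_sum, smul_comm c]

lemma ssum_ksmul {k A : Type*} [CommRing k] [Ring A] [Algebra k A]
    (c : k) (n : ℕ) (F : ℕ → ℕ → ℕ → A) :
    ssum n (fun r s t => c • F r s t) = c • ssum n F := by
  unfold ssum
  rw [← bsum_ksmul]
  congr 1; funext r w; rw [bsum_ksmul]

theorem pbar_rota_baxter_hurwitz
    {k A : Type*} [CommRing k] [Ring A] [Algebra k A] (lam : k)
    (P : A →ₗ[k] A)
    (hP : ∀ a b : A, P a * P b = P (P a * b + a * P b + lam • (a * b))) :
    (∀ f g : ℕ → A, pbar P (f + g) = pbar P f + pbar P g) ∧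
    (∀ (c : k) (f : ℕ → A), pbar P (c • f) = c • pbar P f) ∧
    (∀ f g : ℕ → A,
      hurwitz lam (pbar P f) (pbar P g) =
        pbar P (hurwitz lam (pbar P f) g + hurwitz lam f (pbar P g) +
          lam • hurwitz lam f g)) ∧
    (∀ f : ℕ → A, (fun n => pbar P f (n + 1)) = f) ∧
    (∀ f : ℕ → A, pbar P f 0 = P (f 0)) := by
  refine ⟨?_, ?_, ?_, ?_, ?_⟩
  · intro f g; funext n; cases n <;> simp [pbar]
  · intro c f; funext n; cases n <;> simp [pbar]
  · intro f g
    funext n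
    cases n with
    | zero =>
      show hurwitz lam (pbar P f) (pbar P g) 0
        = P ((hurwitz lam (pbar P f) g + hurwitz lam f (pbar P g) + lam • hurwitz lam f g) 0)
      simpa [hurwitz, pbar, map_add] using hP (f 0) (g 0)
    | succ m =>
      show hurwitz lam (pbar P f) (pbar P g) (m + 1)
        = (hurwitz lam (pbar P f) g + hurwitz lam f (pbar P g) + lam • hurwitz lam f g) m
      simp only [Pi.add_apply, Pi.smul_apply]
      rw [hurwitz_eq_ssum]
      simp only [ssum_succ]
      have h1 : ssum m (fun r s t => lam ^ t • (pbar P f (r + 1 + t) * pbar P g (s + t)))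
          = hurwitz lam f (pbar P g) m := by
        rw [hurwitz_eq_ssum]
        congr 1; funext r s t
        rw [show r + 1 + t = (r + t) + 1 from by omega]
        rfl
      have h2 : ssum m (fun r s t => lam ^ t • (pbar P f (r + t) * pbar P g (s + 1 + t)))
          = hurwitz lam (pbar P f) g m := by
        rw [hurwitz_eq_ssum]
        congr 1; funext r s t
        rw [show s + 1 + t = (s + t) + 1 from by omega]
        rfl
      have h3 : ssum m (fun r s t => lam ^ (t + 1) • (pbar P f (r + (t + 1)) * pbar P g (s + (t + 1))))
          = lam • hurwitz lam f g m := by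
        rw [hurwitz_eq_ssum, ← ssum_ksmul]
        congr 1; funext r s t
        rw [pow_succ, mul_comm, mul_smul]
        rfl
      rw [h1, h2, h3]
      abel
  · intro f; funext n; rfl
  · intro f; rfl
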